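/- arXiv:0708.2758 — 8 statements merged into one kernel-verified Lean document; each statement's English description precedes it below -/
import Mathlib

section
/- Let T be a group and t : T → T an automorphism with t² = id. Let X = {x ∈ T | t(x) = x⁻¹} and Tᵗ = {s ∈ T | t(s) = s}. If the squaring map is bijective on X, then every g ∈ T can be written as g = s·x with s ∈ Tᵗ and x ∈ X, and this factorization is unique. -/
theorem twisted_unique_factorization {T : Type*} [Group T] (t : T ≃* T)
    (ht : ∀ x : T, t (t x) = x)
    (hsq : Set.BijOn (fun x => x ^ 2) {x : T | t x = x⁻¹} {x : T | t x = x⁻¹}) :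
    ∀ g : T, ∃! p : T × T, t p.1 = p.1 ∧ t p.2 = p.2⁻¹ ∧ g = p.1 * p.2 := by
  intro g
  have ha : (t g)⁻¹ * g ∈ {x : T | t x = x⁻¹} := by
    simp [Set.mem_setOf_eq, ht g, mul_comm]
  obtain ⟨x, hxX, hx2⟩ := hsq.surjOn ha
  simp only [Set.mem_setOf_eq] at hxX
  have hx2' : x ^ 2 = (t g)⁻¹ * g := hx2
  refine ⟨(g * x⁻¹, x), ⟨?_, hxX, by group⟩, ?_⟩
  · have : t g * x = g * x⁻¹ := by
      have := hx2'
      rw [pow_two] at this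
      have h := congrArg (fun y => t g * y * x⁻¹) this
      simpa [mul_assoc] using h
    simpa [map_mul, map_inv, hxX] using this
  · rintro ⟨s', x'⟩ ⟨hs', hx', hg'⟩
    simp only at hs' hx' hg'
    have hx'2 : x' ^ 2 = (t g)⁻¹ * g := by
      rw [hg', map_mul, hs', hx', pow_two]
      group
    have hxx : x' = x := hsq.injOn hx' (by exact hxX) (by simp [hx'2, hx2'])
    have : s' = g * x⁻¹ := by rw [hg', hxx]; group
    exact Prod.ext this hxx
end

section
/- Let T be a group with involutive automorphism t, X = {x | t(x) = x⁻¹}, Tᵗ the fixed subgroup, and suppose squaring is bijective on X. Define, for x,y ∈ X, elements s(x,y) ∈ Tᵗ and x∘y ∈ X by the unique factorization xy = s(x,y)·(x∘y). Then (x∘y)² = y x² y. -/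
theorem twisted_circ_square {T : Type*} [Group T] (t : T ≃* T)
    (ht : ∀ x : T, t (t x) = x)
    (hsq : Set.BijOn (fun x => x ^ 2) {x : T | t x = x⁻¹} {x : T | t x = x⁻¹})
    (x y s z : T) (hx : t x = x⁻¹) (hy : t y = y⁻¹) (hs : t s = s) (hz : t z = z⁻¹)
    (hfact : x * y = s * z) :
    z ^ 2 = y * x ^ 2 * y := by
  have h1 : x⁻¹ * y⁻¹ = s * z⁻¹ := by
    have h := congrArg t hfact
    simpa [map_mul, hx, hy, hs, hz] using h
  have hs' : s = x * y * z⁻¹ := by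
    have := hfact
    rw [eq_comm]
    rw [mul_inv_eq_iff_eq_mul]
    simp [mul_assoc, this]
  rw [hs'] at h1
  have h3 : z * z = ((x * y)⁻¹ * (x⁻¹ * y⁻¹))⁻¹ := by
    rw [h1, ← sq]; group
  have h2 : z * z = y * x * (x * y) := by
    rw [h3]; simp [mul_assoc]
  calc z ^ 2 = z * z := sq z
    _ = y * x * (x * y) := h2
    _ = y * x ^ 2 * y := by simp [pow_two, mul_assoc]
end

section
/- Under the assumption that squaring is bijective on X = {x ∈ T | t(x) = x⁻¹} (t an involutive automorphism of the group T), the set X coincides with the orbit {t(g)⁻¹ g : g ∈ T} of the identity under the twisted action x^g = t(g)⁻¹ x g. -/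
theorem inverted_set_eq_orbit {T : Type*} [Group T] (t : T ≃* T)
    (ht : ∀ x : T, t (t x) = x)
    (hsq : Set.BijOn (fun x => x ^ 2) {x : T | t x = x⁻¹} {x : T | t x = x⁻¹}) :
    {x : T | t x = x⁻¹} = Set.range (fun g : T => (t g)⁻¹ * g) := by
  ext x
  constructor
  · intro hx
    obtain ⟨y, hy, hyx⟩ := hsq.surjOn hx
    refine ⟨y, ?_⟩
    simp only [Set.mem_setOf_eq] at hy hyx ⊢
    simp [hy, ← hyx, sq]
  · rintro ⟨g, rfl⟩
    simp only [Set.mem_setOf_eq, map_mul, map_inv, ht, mul_inv_rev, inv_inv]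
end

section
/- For a finite abelian group A of odd order, the alternation map sending a bimultiplicative form β : A × A → kˣ to Alt(β)(s,t) = β(s,t)β(t,s)⁻¹ is bijective on the set of alternating bimultiplicative forms (i.e. every alternating form is the alternation of a unique alternating bimultiplicative form). -/
/-- A form `β : A × A → kˣ` is bimultiplicative if it is a homomorphism in each variable. -/
def IsBimultiplicative {A : Type*} [CommGroup A] {k : Type*} [Field k]
    (β : A → A → kˣ) : Prop :=
  (∀ a b c : A, β (a * b) c = β a c * β b c) ∧ (∀ a b c : A, β a (b * c) = β a b * β a c)

section Aux

variable {A : Type*} [CommGroup A] {k : Type*} [Field k]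

lemma bimul_one_left {β : A → A → kˣ} (hβ : IsBimultiplicative (k := k) β) (b : A) :
    β 1 b = 1 := by
  have h := hβ.1 1 1 b
  rw [one_mul] at h
  exact (left_eq_mul.mp h)

lemma bimul_pow_left {β : A → A → kˣ} (hβ : IsBimultiplicative (k := k) β) (a b : A) (j : ℕ) :
    β (a ^ j) b = (β a b) ^ j := by
  induction j with
  | zero => simpa using bimul_one_left hβ b
  | succ j ih => rw [pow_succ, pow_succ, hβ.1, ih]

lemma bimul_card_pow [Finite A] {β : A → A → kˣ} (hβ : IsBimultiplicative (k := k) β)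
    (a b : A) : (β a b) ^ (Nat.card A) = 1 := by
  rw [← bimul_pow_left hβ, pow_card_eq_one', bimul_one_left hβ]

lemma bimul_anti {β : A → A → kˣ} (hβ : IsBimultiplicative (k := k) β)
    (halt : ∀ a : A, β a a = 1) (a b : A) : β b a = (β a b)⁻¹ := by
  have h : β a b * β b a = 1 := by
    have := halt (a * b)
    rw [hβ.1, hβ.2, hβ.2, halt a, halt b, one_mul, mul_one] at this
    exact this
  exact eq_inv_of_mul_eq_one_right h

end Aux

theorem alternation_bijective_of_odd {A : Type*} [CommGroup A] [Finite A]
    (hodd : Odd (Nat.card A)) {k : Type*} [Field k] [IsAlgClosed k] [CharZero k]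
    (γ : A → A → kˣ) (hγ : IsBimultiplicative (k := k) γ) (hγalt : ∀ a : A, γ a a = 1) :
    ∃! β : {β : A → A → kˣ // IsBimultiplicative (k := k) β ∧ ∀ a : A, β a a = 1},
      ∀ s t : A, β.1 s t * (β.1 t s)⁻¹ = γ s t := by
  obtain ⟨m, hm⟩ := hodd
  set β₀ : A → A → kˣ := fun s t => γ s t ^ (m + 1) with hβ₀
  have hbim : IsBimultiplicative (k := k) β₀ := by
    constructor
    · intro a b c; simp only [hβ₀, hγ.1, mul_pow]
    · intro a b c; simp only [hβ₀, hγ.2, mul_pow]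
  have halt : ∀ a : A, β₀ a a = 1 := by
    intro a; simp [hβ₀, hγalt a]
  refine ⟨⟨β₀, hbim, halt⟩, ?_, ?_⟩
  · intro s t
    have hanti : γ t s = (γ s t)⁻¹ := bimul_anti hγ hγalt s t
    have hord : (γ s t) ^ (Nat.card A) = 1 := bimul_card_pow hγ s t
    simp only [hβ₀, hanti, inv_pow, inv_inv]
    rw [← pow_add]
    have : m + 1 + (m + 1) = Nat.card A + 1 := by omega
    rw [this, pow_succ, hord, one_mul]
  · rintro ⟨β, hbβ, haβ⟩ h
    ext s t : 3
    have hanti : β t s = (β s t)⁻¹ := bimul_anti hbβ haβ s t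
    have hsq : β s t ^ 2 = γ s t := by
      have := h s t
      change β s t * (β t s)⁻¹ = γ s t at this
      rw [hanti, inv_inv, ← sq] at this
      exact this
    have hord : (β s t) ^ (Nat.card A) = 1 := bimul_card_pow hbβ s t
    show β s t = β₀ s t
    calc β s t = β s t ^ (Nat.card A + 1) := by rw [pow_succ, hord, one_mul]
    _ = (β s t ^ 2) ^ (m + 1) := by rw [← pow_mul]; congr 1; omega
    _ = β₀ s t := by rw [hsq]
end

section
/- Every alternating bimultiplicative form on a finite abelian group A with values in kˣ is the alternation Alt(β)(s,t) = β(s,t)β(t,s)⁻¹ of some bimultiplicative form β on A. -/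
theorem alternating_is_alternation {A : Type*} [CommGroup A] [Finite A]
    {k : Type*} [Field k] [IsAlgClosed k] [CharZero k]
    (γ : A → A → kˣ) (hγ : IsBimultiplicative (k := k) γ) (hγalt : ∀ a : A, γ a a = 1) :
    ∃ β : A → A → kˣ, IsBimultiplicative (k := k) β ∧
      ∀ s t : A, γ s t = β s t * (β t s)⁻¹ := by
  classical
  obtain ⟨ι, hι, n, hn, ⟨e⟩⟩ := CommGroup.equiv_prod_multiplicative_zmod_of_finite A
  letI : LinearOrder ι := LinearOrder.lift' (Fintype.equivFin ι) (Equiv.injective _)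
  -- γ as a monoid hom in each variable
  have h1l : ∀ y, γ 1 y = 1 := by
    intro y
    have h := hγ.1 1 1 y
    rw [one_mul] at h
    exact mul_left_cancel (a := γ 1 y) (by rw [← h, mul_one])
  have h1r : ∀ x, γ x 1 = 1 := by
    intro x
    have h := hγ.2 x 1 1
    rw [one_mul] at h
    exact mul_left_cancel (a := γ x 1) (by rw [← h, mul_one])
  let Φ : A → A →* kˣ := fun y => ⟨⟨fun x => γ x y, h1l y⟩, fun a b => hγ.1 a b y⟩
  let Ψ : A → A →* kˣ := fun x => ⟨⟨fun y => γ x y, h1r x⟩, fun a b => hγ.2 x a b⟩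
  -- skew-symmetry
  have hskew : ∀ s t : A, γ t s = (γ s t)⁻¹ := by
    intro s t
    have h : γ (s * t) (s * t) = 1 := hγalt (s * t)
    rw [hγ.1, hγ.2, hγ.2, hγalt s, hγalt t, one_mul, mul_one] at h
    rw [eq_inv_iff_mul_eq_one, mul_comm]
    exact h
  -- projections onto cyclic components
  let π : ι → A → A := fun i s => e.symm (Pi.mulSingle i (e s i))
  have hπmul : ∀ i (s t : A), π i (s * t) = π i s * π i t := by
    intro i s t
    simp only [π, map_mul, Pi.mul_apply, Pi.mulSingle_mul]
  have hπprod : ∀ s : A, ∏ i, π i s = s := by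
    intro s
    rw [← map_prod e.symm]
    rw [Finset.univ_prod_mulSingle (fun i => e s i)]
    exact e.symm_apply_apply s
  -- diagonal vanishing
  have hπdiag : ∀ i (s t : A), γ (π i s) (π i t) = 1 := by
    intro i s t
    haveI : NeZero (n i) := ⟨by have := hn i; omega⟩
    set g : A := e.symm (Pi.mulSingle i (Multiplicative.ofAdd (1 : ZMod (n i)))) with hg
    have key : ∀ u : A, π i u = g ^ (Multiplicative.toAdd (e u i)).val := by
      intro u
      have : e u i = (Multiplicative.ofAdd (1 : ZMod (n i))) ^ (Multiplicative.toAdd (e u i)).val := by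
        rw [← ofAdd_nsmul]
        rw [nsmul_eq_mul, mul_one]
        rw [ZMod.natCast_val, ZMod.cast_id]
        exact (ofAdd_toAdd _).symm
      show e.symm (Pi.mulSingle i (e u i)) = g ^ (Multiplicative.toAdd (e u i)).val
      conv_lhs => rw [this]
      rw [Pi.mulSingle_pow, map_pow]
    rw [key s, key t]
    generalize (Multiplicative.toAdd (e s i)).val = a
    generalize (Multiplicative.toAdd (e t i)).val = b
    calc γ (g ^ a) (g ^ b) = (γ g (g ^ b)) ^ a := map_pow (Φ (g ^ b)) g a
      _ = ((γ g g) ^ b) ^ a := by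
          rw [show γ g (g ^ b) = (γ g g) ^ b from map_pow (Ψ g) g b]
      _ = 1 := by rw [hγalt, one_pow, one_pow]
  -- define β
  set S : Finset (ι × ι) := Finset.univ.filter (fun p : ι × ι => p.1 < p.2) with hS
  set β : A → A → kˣ := fun s t => ∏ p ∈ S, γ (π p.1 s) (π p.2 t) with hβ
  refine ⟨β, ⟨?_, ?_⟩, ?_⟩
  · intro a b c
    rw [hβ]
    simp only
    rw [← Finset.prod_mul_distrib]
    refine Finset.prod_congr rfl fun p _ => ?_
    rw [hπmul, hγ.1]
  · intro a b c
    rw [hβ]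
    simp only
    rw [← Finset.prod_mul_distrib]
    refine Finset.prod_congr rfl fun p _ => ?_
    rw [hπmul, hγ.2]
  · intro s t
    -- expand γ s t as double product
    have expand : γ s t = ∏ p ∈ (Finset.univ ×ˢ Finset.univ : Finset (ι × ι)),
        γ (π p.1 s) (π p.2 t) := by
      conv_lhs => rw [← hπprod s, ← hπprod t]
      rw [show γ (∏ i, π i s) (∏ j, π j t) = (Φ (∏ j, π j t)) (∏ i, π i s) from rfl]
      rw [map_prod]
      rw [Finset.prod_product]
      refine Finset.prod_congr rfl fun i _ => ?_
      rw [show (Φ (∏ j, π j t)) (π i s) = (Ψ (π i s)) (∏ j, π j t) from rfl]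
      rw [map_prod]
      exact Finset.prod_congr rfl fun j _ => rfl
    -- split the product
    have hsplit : (Finset.univ ×ˢ Finset.univ : Finset (ι × ι)) =
        S ∪ (Finset.univ ×ˢ Finset.univ).filter (fun p => ¬ p.1 < p.2) := by
      ext p
      by_cases h : p.1 < p.2
      · simp [hS, h]
      · simp [hS, h, le_of_not_gt h]
    have hdisj : Disjoint S ((Finset.univ ×ˢ Finset.univ).filter (fun p : ι × ι => ¬ p.1 < p.2)) := by
      rw [Finset.disjoint_left]
      intro p hp hq
      simp only [hS, Finset.mem_filter] at hp hq
      exact hq.2 hp.2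
    rw [expand, hsplit, Finset.prod_union hdisj]
    congr 1
    -- the "≥" part equals (β t s)⁻¹
    have step1 : ∏ p ∈ (Finset.univ ×ˢ Finset.univ).filter (fun p : ι × ι => ¬ p.1 < p.2),
        γ (π p.1 s) (π p.2 t)
        = ∏ p ∈ (Finset.univ ×ˢ Finset.univ).filter (fun p : ι × ι => p.2 < p.1),
        γ (π p.1 s) (π p.2 t) := by
      symm
      refine Finset.prod_subset ?_ ?_
      · intro p hp
        simp only [Finset.mem_filter] at hp ⊢
        exact ⟨hp.1, not_lt_of_gt hp.2⟩
      · intro p hp hnp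
        simp only [Finset.mem_filter] at hp hnp
        have : p.1 = p.2 := le_antisymm (not_lt.mp (fun h => hnp ⟨hp.1, h⟩)) (not_lt.mp hp.2)
        rw [show p = (p.1, p.2) from rfl, this]
        exact hπdiag p.2 s t
    rw [step1]
    rw [hβ]
    simp only
    rw [← Finset.prod_inv_distrib]
    refine Finset.prod_nbij' (fun p => Prod.swap p) (fun p => Prod.swap p) ?_ ?_
      (fun p _ => Prod.swap_swap p) (fun p _ => Prod.swap_swap p) ?_
    · intro p hp
      simp only [Finset.mem_filter, Finset.mem_product, Finset.mem_univ, true_and,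
        and_true] at hp
      simp only [hS, Finset.mem_filter, Finset.mem_univ, true_and, Prod.fst_swap,
        Prod.snd_swap]
      exact hp
    · intro p hp
      simp only [hS, Finset.mem_filter, Finset.mem_univ, true_and] at hp
      simp only [Finset.mem_filter, Finset.mem_product, Finset.mem_univ, true_and,
        and_true, Prod.fst_swap, Prod.snd_swap]
      exact hp
    · intro p _
      rw [Prod.fst_swap, Prod.snd_swap]
      exact hskew (π p.2 t) (π p.1 s)
end

section
/- Let A = ℤ/p² ⊕ ℤ/p² with the alternating form β((a,b),(c,d)) = ε^{ad−bc}, where ε is a primitive p²-th root of unity in k. Then the Lagrangian subgroup B = pA gives a short exact sequence B → A → Hom(B,kˣ) that does not split. -/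
set_option maxHeartbeats 1600000 in
theorem lagrangian_extension_nonsplit {k : Type*} [Field k] [IsAlgClosed k] [CharZero k]
    (p : ℕ) (hp : p.Prime) (ε : kˣ) (hε : orderOf ε = p ^ 2)
    (β : (ZMod (p ^ 2) × ZMod (p ^ 2)) → (ZMod (p ^ 2) × ZMod (p ^ 2)) → kˣ)
    (hβ : ∀ x y : ZMod (p ^ 2) × ZMod (p ^ 2),
      β x y = ε ^ (x.1 * y.2 - x.2 * y.1).val)
    (B : AddSubgroup (ZMod (p ^ 2) × ZMod (p ^ 2)))
    (hB : ∀ x : ZMod (p ^ 2) × ZMod (p ^ 2), x ∈ B ↔ ∃ y, p • y = x) :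
    ¬ ∃ s : AddChar B kˣ → ZMod (p ^ 2) × ZMod (p ^ 2),
        (∀ χ ψ : AddChar B kˣ, s (χ * ψ) = s χ + s ψ) ∧
        (∀ (χ : AddChar B kˣ) (b : B), β (s χ) (b : ZMod (p ^ 2) × ZMod (p ^ 2)) = χ b) := by
  have hp2 : p ^ 2 ≠ 0 := pow_ne_zero 2 hp.pos.ne'
  haveI : NeZero (p ^ 2) := ⟨hp2⟩
  rintro ⟨s, hadd, hcomp⟩
  -- s 1 = 0
  have hs1 : s 1 = 0 := by
    have e : (1 : AddChar B kˣ) * 1 = 1 := by ext b; simp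
    have h : s 1 = s 1 + s 1 := ((congrArg s e).symm).trans (hadd 1 1)
    exact left_eq_add.mp h
  -- p^2 kills everything in A
  have hkill : ∀ x : ZMod (p ^ 2) × ZMod (p ^ 2), (p ^ 2) • x = 0 := by
    intro x
    ext <;> simp [nsmul_eq_mul, ZMod.natCast_self, (by rw [← Nat.cast_pow, ZMod.natCast_self] : ((p : ZMod (p ^ 2))) ^ 2 = 0)]
  -- every element of B is killed by p
  have hBp : ∀ b : B, p • b = 0 := by
    rintro ⟨b, hb⟩
    obtain ⟨y, rfl⟩ := (hB b).mp hb
    refine Subtype.ext ?_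
    show p • (p • y) = 0
    rw [smul_smul, ← pow_two]
    exact hkill y
  -- every character has order dividing p
  have hchp : ∀ χ : AddChar B kˣ, χ ^ p = 1 := by
    intro χ
    ext b
    rw [AddChar.pow_apply, ← AddChar.map_nsmul_eq_pow, hBp, AddChar.map_zero_eq_one,
      AddChar.one_apply]
  -- s of a power
  have hsn : ∀ (χ : AddChar B kˣ) (n : ℕ), s (χ ^ n) = n • s χ := by
    intro χ n
    induction n with
    | zero => simpa using hs1
    | succ n ih =>
      calc s (χ ^ (n + 1)) = s (χ ^ n * χ) := congrArg s (pow_succ χ n)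
        _ = s (χ ^ n) + s χ := hadd _ _
        _ = n • s χ + s χ := by rw [ih]
        _ = (n + 1) • s χ := (succ_nsmul _ n).symm
  have hps : ∀ χ : AddChar B kˣ, p • s χ = 0 := by
    intro χ
    rw [← hsn, hchp, hs1]
  -- the nontrivial character
  have hζ : ε ^ (p ^ 2) = 1 := by rw [← hε]; exact pow_orderOf_eq_one ε
  set ψ : AddChar (ZMod (p ^ 2)) kˣ := AddChar.zmodChar (p ^ 2) hζ with hψ
  set χ : AddChar B kˣ :=
    ψ.compAddMonoidHom ((AddMonoidHom.fst _ _).comp B.subtype) with hχ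
  -- the element (p, 0) of B
  have hb0mem : ((p : ZMod (p ^ 2)), (0 : ZMod (p ^ 2))) ∈ B := by
    rw [hB]
    exact ⟨(1, 0), by ext <;> simp [nsmul_eq_mul]⟩
  set b0 : B := ⟨((p : ZMod (p ^ 2)), 0), hb0mem⟩ with hb0
  have key := hcomp χ b0
  -- LHS is 1
  have hL : β (s χ) (b0 : ZMod (p ^ 2) × ZMod (p ^ 2)) = 1 := by
    rw [hβ]
    have h2 : (p : ZMod (p ^ 2)) * (s χ).2 = 0 := by
      have := congrArg Prod.snd (hps χ)
      simpa [nsmul_eq_mul] using this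
    have : ((s χ).1 * (b0 : ZMod (p ^ 2) × ZMod (p ^ 2)).2
        - (s χ).2 * (b0 : ZMod (p ^ 2) × ZMod (p ^ 2)).1) = 0 := by
      show (s χ).1 * 0 - (s χ).2 * (p : ZMod (p ^ 2)) = 0
      rw [mul_zero, mul_comm, h2, zero_sub, neg_zero]
    rw [this]
    simp
  -- RHS is ε ^ p ≠ 1
  have hR : χ b0 = ε ^ p := by
    show ψ ((p : ℕ) : ZMod (p ^ 2)) = ε ^ p
    rw [hψ]
    exact AddChar.zmodChar_apply' hζ p
  rw [hL, hR] at key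
  have hdvd : p ^ 2 ∣ p := hε ▸ orderOf_dvd_of_pow_eq_one key.symm
  have : p ^ 2 ≤ p := Nat.le_of_dvd hp.pos hdvd
  have hlt : p < p ^ 2 := by nlinarith [hp.two_le]
  omega
end

section
/- Let C : V × V × V → 𝔽₃ be a symmetric trilinear form on a finite-dimensional 𝔽₃-vector space V satisfying C(v,v,v) = 0 for all v, and let c : V → 𝔽₃ be a cubic form with c(u+v) − c(u) − c(v) = C(u,u,v) + C(u,v,v). Then for any linear g : V → V preserving C, the map ψ(g)(v) = c(v) − c(g(v)) is 𝔽₃-linear in v. -/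
theorem cubic_cocycle_linear {V : Type*} [AddCommGroup V]
    [Module (ZMod 3) V] [FiniteDimensional (ZMod 3) V]
    (C : V →ₗ[ZMod 3] V →ₗ[ZMod 3] V →ₗ[ZMod 3] ZMod 3)
    (hsym1 : ∀ u v w : V, C u v w = C v u w)
    (hsym2 : ∀ u v w : V, C u v w = C u w v)
    (hzero : ∀ v : V, C v v v = 0)
    (c : V → ZMod 3) (hc : ∀ u v : V, c (u + v) - c u - c v = C u u v + C u v v)
    (g : V →ₗ[ZMod 3] V) (hg : Function.Bijective g)
    (hgC : ∀ u v w : V, C (g u) (g v) (g w) = C u v w) :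
    IsLinearMap (ZMod 3) (fun v : V => c v - c (g v)) := by
  have hadd : ∀ u v : V, c (u + v) - c (g (u + v)) =
      (c u - c (g u)) + (c v - c (g v)) := by
    intro u v
    have h1 := hc u v
    have h2 := hc (g u) (g v)
    rw [← map_add g, hgC, hgC] at h2
    linear_combination h1 - h2
  have h0 : c 0 = 0 := by
    have := hc 0 0
    simp at this
    linear_combination this
  have hf0 : c (0 : V) - c (g 0) = 0 := by
    rw [map_zero, h0]; ring
  constructor
  · exact hadd
  · intro a v
    fin_cases a
    · show c ((0 : ZMod 3) • v) - c (g ((0 : ZMod 3) • v)) =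
        (0 : ZMod 3) • (c v - c (g v))
      simpa using hf0
    · show c ((1 : ZMod 3) • v) - c (g ((1 : ZMod 3) • v)) =
        (1 : ZMod 3) • (c v - c (g v))
      simp [one_smul]
    · show c ((2 : ZMod 3) • v) - c (g ((2 : ZMod 3) • v)) =
        (2 : ZMod 3) • (c v - c (g v))
      rw [two_smul (ZMod 3) v]
      rw [hadd v v]
      rw [smul_eq_mul]; ring
end

section
/- Let A₁, A₂ be normal abelian subgroups of a finite group G carrying G-invariant non-degenerate bimultiplicative forms b₁, b₂ with values in kˣ, and let B = [A₁,A₂]. Define B^⊥_{b_i} = {y ∈ A_i : b_i(y,x)=1 for all x ∈ B}. Then [B^⊥_{b₁}, A₂] = 1 and [A₁, B^⊥_{b₂}] = 1. -/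
open scoped commutatorElement in
theorem perp_key {G : Type*} [Group G] {k : Type*} [Field k]
    (A₁ A₂ : Subgroup G) (h1 : A₁.Normal)
    (b₁ : G → G → kˣ)
    (hbm1 : ∀ x ∈ A₁, ∀ y ∈ A₁, ∀ z ∈ A₁,
      b₁ (x * y) z = b₁ x z * b₁ y z ∧ b₁ z (x * y) = b₁ z x * b₁ z y)
    (hnd1 : ∀ x ∈ A₁, (∀ y ∈ A₁, b₁ x y = 1) → x = 1)
    (hinv1 : ∀ g : G, ∀ x ∈ A₁, ∀ y ∈ A₁, b₁ (g * x * g⁻¹) (g * y * g⁻¹) = b₁ x y)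
    (hB : ⁅A₁, A₂⁆ ≤ A₁ ⊓ A₂) :
    ∀ y ∈ A₁, (∀ x ∈ ⁅A₁, A₂⁆, b₁ y x = 1) → ∀ a ∈ A₂, y * a = a * y := by
  intro y hy hperp a ha
  have hone : ∀ w ∈ A₁, b₁ (1 : G) w = 1 := by
    intro w hw
    have h := (hbm1 1 A₁.one_mem 1 A₁.one_mem w hw).1
    rw [one_mul] at h
    exact (left_eq_mul.mp h)
  have hinvl : ∀ w ∈ A₁, ∀ z ∈ A₁, b₁ w⁻¹ z = (b₁ w z)⁻¹ := by
    intro w hw z hz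
    have h := (hbm1 w hw w⁻¹ (A₁.inv_mem hw) z hz).1
    rw [mul_inv_cancel, hone z hz] at h
    exact eq_inv_of_mul_eq_one_right h.symm
  set c := y * a * y⁻¹ * a⁻¹ with hc_def
  have hc : c ∈ ⁅A₁, A₂⁆ := by
    have := Subgroup.commutator_mem_commutator hy ha
    rwa [commutatorElement_def] at this
  have hcA1 : c ∈ A₁ := (hB hc).1
  have hcone : c = 1 := by
    apply hnd1 c hcA1
    intro z hz
    have ht : ⁅z⁻¹, a⁻¹⁆ ∈ ⁅A₁, A₂⁆ :=
      Subgroup.commutator_mem_commutator (A₁.inv_mem hz) (A₂.inv_mem ha)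
    have htA1 : ⁅z⁻¹, a⁻¹⁆ ∈ A₁ := (hB ht).1
    have hconj : a⁻¹ * z * a = z * ⁅z⁻¹, a⁻¹⁆ := by
      rw [commutatorElement_def]; group
    have hmem1 : a * y⁻¹ * a⁻¹ ∈ A₁ := h1.conj_mem _ (A₁.inv_mem hy) a
    have hmem2 : a⁻¹ * z * a ∈ A₁ := by
      have := h1.conj_mem z hz a⁻¹
      simpa using this
    have e1 : b₁ c z = b₁ y z * b₁ (a * y⁻¹ * a⁻¹) z := by
      have : c = y * (a * y⁻¹ * a⁻¹) := by rw [hc_def]; group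
      rw [this]
      exact (hbm1 y hy _ hmem1 z hz).1
    have e2 : b₁ (a * y⁻¹ * a⁻¹) z = b₁ y⁻¹ (a⁻¹ * z * a) := by
      have h := hinv1 a y⁻¹ (A₁.inv_mem hy) (a⁻¹ * z * a) hmem2
      rw [show a * (a⁻¹ * z * a) * a⁻¹ = z by group] at h
      exact h
    have e4 : b₁ y (a⁻¹ * z * a) = b₁ y z * b₁ y ⁅z⁻¹, a⁻¹⁆ := by
      rw [hconj]
      exact (hbm1 z hz _ htA1 y hy).2
    rw [e1, e2, hinvl y hy _ hmem2, e4, hperp _ ht, mul_one, mul_inv_cancel]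
  calc y * a = (y * a * y⁻¹ * a⁻¹) * (a * y) := by group
    _ = a * y := by rw [← hc_def, hcone, one_mul]

theorem perp_commutes {G : Type*} [Group G] [Finite G]
    {k : Type*} [Field k] [IsAlgClosed k] [CharZero k]
    (A₁ A₂ : Subgroup G) (h1 : A₁.Normal) (h2 : A₂.Normal)
    (hc1 : ∀ a ∈ A₁, ∀ b ∈ A₁, a * b = b * a)
    (hc2 : ∀ a ∈ A₂, ∀ b ∈ A₂, a * b = b * a)
    (b₁ b₂ : G → G → kˣ)
    (hbm1 : ∀ x ∈ A₁, ∀ y ∈ A₁, ∀ z ∈ A₁,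
      b₁ (x * y) z = b₁ x z * b₁ y z ∧ b₁ z (x * y) = b₁ z x * b₁ z y)
    (hbm2 : ∀ x ∈ A₂, ∀ y ∈ A₂, ∀ z ∈ A₂,
      b₂ (x * y) z = b₂ x z * b₂ y z ∧ b₂ z (x * y) = b₂ z x * b₂ z y)
    (hnd1 : ∀ x ∈ A₁, (∀ y ∈ A₁, b₁ x y = 1) → x = 1)
    (hnd2 : ∀ x ∈ A₂, (∀ y ∈ A₂, b₂ x y = 1) → x = 1)
    (hinv1 : ∀ g : G, ∀ x ∈ A₁, ∀ y ∈ A₁, b₁ (g * x * g⁻¹) (g * y * g⁻¹) = b₁ x y)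
    (hinv2 : ∀ g : G, ∀ x ∈ A₂, ∀ y ∈ A₂, b₂ (g * x * g⁻¹) (g * y * g⁻¹) = b₂ x y)
    (hB : ⁅A₁, A₂⁆ ≤ A₁ ⊓ A₂) :
    (∀ y ∈ A₁, (∀ x ∈ ⁅A₁, A₂⁆, b₁ y x = 1) → ∀ a ∈ A₂, y * a = a * y) ∧
    (∀ y ∈ A₂, (∀ x ∈ ⁅A₁, A₂⁆, b₂ y x = 1) → ∀ a ∈ A₁, y * a = a * y) := by
  have hcomm : ⁅A₂, A₁⁆ = ⁅A₁, A₂⁆ := Subgroup.commutator_comm A₂ A₁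
  have hB' : ⁅A₂, A₁⁆ ≤ A₂ ⊓ A₁ := by
    rw [hcomm]
    exact hB.trans (by rw [inf_comm])
  constructor
  · exact perp_key A₁ A₂ h1 b₁ hbm1 hnd1 hinv1 hB
  · intro y hy hp
    exact perp_key A₂ A₁ h2 b₂ hbm2 hnd2 hinv2 hB' y hy (by rw [hcomm]; exact hp)
end
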